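/- Let u = Σ_α u_α x^α, v = Σ_α v_α x^α, f = Σ_α f_α x^α be formal power series in n variables with u = v·f. Suppose |u_α| ≤ a r^{|α|} and |v_α| ≤ a r^{|α|} for all multi-indices α and some a, r > 0, that v_α = 0 whenever |α| < k, and that |v_{(k,0,…,0)}| = c > 0. Then there exist A > 0 and R = (R₁,…,Rₙ), depending only on a, c, r, k, n, such that |f_β| ≤ A R₁^{β₁}⋯Rₙ^{βₙ} for every multi-index β. In particular f has a positive radius of convergence and defines a real analytic function near the origin. -/

import Mathlib

open MvPowerSeries

lemma geom_prod_bound {n : ℕ} (τ : ℝ) (h0 : 0 < τ) (h1 : τ < 1) (γ : Fin n →₀ ℕ) :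
    ∑ α ∈ Finset.Iic γ, τ ^ (∑ i, α i) ≤ ((1 - τ)⁻¹) ^ n := by
  have hτ1 : (1:ℝ) - τ > 0 := by linarith
  have hgeom : ∀ m : ℕ, ∑ j ∈ Finset.range m, τ ^ j ≤ (1 - τ)⁻¹ := by
    intro m
    rw [geom_sum_eq h1.ne]
    have he : (τ ^ m - 1) / (τ - 1) = (1 - τ ^ m) * (1 - τ)⁻¹ := by
      rw [← neg_sub (1:ℝ) (τ^m), ← neg_sub (1:ℝ) τ, neg_div_neg_eq, div_eq_mul_inv]
    rw [he]
    have : (1:ℝ) - τ ^ m ≤ 1 := by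
      have : 0 ≤ τ ^ m := pow_nonneg h0.le m
      linarith
    calc (1 - τ ^ m) * (1 - τ)⁻¹ ≤ 1 * (1 - τ)⁻¹ :=
          mul_le_mul_of_nonneg_right this (inv_nonneg.2 hτ1.le)
      _ = (1 - τ)⁻¹ := one_mul _
  calc ∑ α ∈ Finset.Iic γ, τ ^ (∑ i, α i)
      = ∑ α ∈ Finset.Iic γ, ∏ i, τ ^ (α i) := by
        refine Finset.sum_congr rfl fun α _ => ?_
        rw [Finset.prod_pow_eq_pow_sum]
    _ = ∑ g ∈ (Finset.Iic γ).image (fun α : Fin n →₀ ℕ => ⇑α), ∏ i, τ ^ (g i) := by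
        rw [Finset.sum_image]
        intro x _ y _ h
        exact DFunLike.coe_injective h
    _ ≤ ∑ g ∈ Fintype.piFinset (fun i => Finset.range (γ i + 1)), ∏ i, τ ^ (g i) := by
        apply Finset.sum_le_sum_of_subset_of_nonneg
        · intro g hg
          simp only [Finset.mem_image] at hg
          obtain ⟨α, hα, rfl⟩ := hg
          rw [Finset.mem_Iic] at hα
          simp only [Fintype.mem_piFinset, Finset.mem_range, Nat.lt_succ_iff]
          intro i
          exact hα i
        · intro g _ _
          exact Finset.prod_nonneg fun i _ => pow_nonneg h0.le _
    _ = ∏ i, ∑ j ∈ Finset.range (γ i + 1), τ ^ j := (Finset.prod_univ_sum _ _).symm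
    _ ≤ ∏ _i : Fin n, (1 - τ)⁻¹ := by
        apply Finset.prod_le_prod
        · intro i _
          exact Finset.sum_nonneg fun j _ => pow_nonneg h0.le _
        · intro i _
          exact hgeom _
    _ = ((1 - τ)⁻¹) ^ n := by simp

set_option maxHeartbeats 2000000 in
/-- Coefficient estimate for the quotient of two formal power series: if `u = v·f`,
the coefficients of `u` and `v` satisfy `|u_α|, |v_α| ≤ a r^{|α|}`, `v` has no terms of
degree `< k`, and `|v_{(k,0,…,0)}| = c > 0`, then `|f_β| ≤ A·R₁^{β₁}⋯Rₙ^{βₙ}` for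
constants `A, R` depending only on `a, c, r, k, n`. -/
theorem stmt7 {n : ℕ} (hn : 0 < n) (a r c : ℝ) (k : ℕ)
    (ha : 0 < a) (hr : 0 < r) (hc : 0 < c) :
    ∃ A : ℝ, 0 < A ∧ ∃ R : Fin n → ℝ, (∀ i, 0 < R i) ∧
      ∀ u v f : MvPowerSeries (Fin n) ℝ, u = v * f →
        (∀ d : Fin n →₀ ℕ, |coeff d u| ≤ a * r ^ (∑ i, d i)) →
        (∀ d : Fin n →₀ ℕ, |coeff d v| ≤ a * r ^ (∑ i, d i)) →
        (∀ d : Fin n →₀ ℕ, (∑ i, d i) < k → coeff d v = 0) →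
        |coeff (Finsupp.single (⟨0, hn⟩ : Fin n) k) v| = c →
        ∀ β : Fin n →₀ ℕ, |coeff β f| ≤ A * ∏ i, R i ^ β i := by
  classical
  set i0 : Fin n := ⟨0, hn⟩ with hi0
  set ε : ℝ := c / (2 * a * r ^ k) with hε
  have hεpos : 0 < ε := by positivity
  set τ : ℝ := ε / ((1 + ε) * n) with hτdef
  have hn' : (0:ℝ) < n := by exact_mod_cast hn
  have hτpos : 0 < τ := by positivity
  have hτlt : τ < 1 := by
    rw [hτdef, div_lt_one (by positivity)]
    have h1 : (1:ℝ) ≤ n := by exact_mod_cast hn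
    nlinarith
  have hnτ : (n:ℝ) * τ = ε / (1 + ε) := by
    rw [hτdef]
    field_simp
  have hbern : ((1 - τ)⁻¹) ^ n ≤ 1 + ε := by
    have h1 : (1:ℝ) - (n:ℝ) * τ ≤ (1 - τ) ^ n := by
      have := one_add_mul_le_pow (a := -τ) (by linarith) n
      simpa [sub_eq_add_neg] using this
    have h2 : (1:ℝ) - (n:ℝ) * τ = (1 + ε)⁻¹ := by
      rw [hnτ]
      field_simp
      ring
    have h3 : (0:ℝ) < (1 + ε)⁻¹ := by positivity
    have h4 : (1 + ε)⁻¹ ≤ (1 - τ) ^ n := by rw [← h2]; exact h1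
    rw [inv_pow]
    calc ((1 - τ) ^ n)⁻¹ ≤ ((1 + ε)⁻¹)⁻¹ := inv_anti₀ h3 h4
      _ = 1 + ε := inv_inv _
  set σ : ℝ := τ⁻¹ with hσdef
  have hσpos : 0 < σ := by positivity
  have hσ1 : 1 ≤ σ := by rw [hσdef, le_inv_comm₀ one_pos hτpos, inv_one]; exact hτlt.le
  have hστ : τ * σ = 1 := mul_inv_cancel₀ hτpos.ne'
  set B : ℝ := r * σ ^ (k + 1) with hBdef
  set C : ℝ := σ ^ k with hCdef
  have hBpos : 0 < B := by positivity
  have hCpos : 0 < C := by positivity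
  have hrB : r ≤ B := by
    rw [hBdef]
    nlinarith [one_le_pow₀ hσ1 (n := k + 1)]
  have hC1 : 1 ≤ C := one_le_pow₀ hσ1
  set A : ℝ := max 1 (2 * a * r ^ k / c) with hAdef
  have hApos : 0 < A := lt_of_lt_of_le one_pos (le_max_left _ _)
  have hA2 : 2 * a * r ^ k ≤ A * c := by
    have := le_max_right 1 (2 * a * r ^ k / c)
    rw [div_le_iff₀ hc] at this
    calc 2 * a * r ^ k = (2 * a * r ^ k / c) * c := by field_simp
      _ ≤ A * c := by
        apply mul_le_mul_of_nonneg_right _ hc.le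
        exact le_max_right _ _
  have hare : a * r ^ k * ε = c / 2 := by
    rw [hε]
    field_simp
  clear_value A B C σ τ ε
  refine ⟨A, hApos, fun i => if i = i0 then B else B * C, fun i => ?_, ?_⟩
  · dsimp only; split <;> positivity
  intro u v f huvf hu hv hvk hvc β
  -- notation
  set S : (Fin n →₀ ℕ) → ℕ := fun d => ∑ i ∈ Finset.univ.erase i0, d i with hSdef
  have hsum_split : ∀ d : Fin n →₀ ℕ, (∑ i, d i) = d i0 + S d := fun d =>
    (Finset.add_sum_erase _ _ (Finset.mem_univ i0)).symm
  have hSle : ∀ d : Fin n →₀ ℕ, S d ≤ ∑ i, d i := fun d => by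
    rw [hsum_split d]; omega
  set e : Fin n →₀ ℕ := Finsupp.single i0 k with hedef
  have hesum : (∑ i, e i) = k := by
    rw [hedef]
    simp [Finsupp.single_apply]
  have heS : S e = 0 := by
    rw [hSdef]
    apply Finset.sum_eq_zero
    intro i hi
    rw [Finset.mem_erase] at hi
    rw [hedef, Finsupp.single_apply, if_neg (fun h => hi.1 h.symm)]
  have hprod : ∀ d : Fin n →₀ ℕ,
      (∏ i, (if i = i0 then B else B * C) ^ d i) = B ^ (∑ i, d i) * C ^ (S d) := by
    intro d
    rw [← Finset.mul_prod_erase Finset.univ _ (Finset.mem_univ i0), if_pos rfl]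
    have h1 : ∀ i ∈ Finset.univ.erase i0,
        (if i = i0 then B else B * C) ^ d i = B ^ d i * C ^ d i := by
      intro i hi
      rw [Finset.mem_erase] at hi
      rw [if_neg hi.1, mul_pow]
    rw [Finset.prod_congr rfl h1, Finset.prod_mul_distrib,
      Finset.prod_pow_eq_pow_sum, Finset.prod_pow_eq_pow_sum,
      hsum_split d, pow_add]
    ring
  suffices key : |coeff β f| ≤ A * (B ^ (∑ i, β i) * C ^ (S β)) by
    rw [hprod β] at *
    linarith [key]
  -- strong induction
  have main : ∀ N : ℕ, ∀ β : Fin n →₀ ℕ,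
      (∑ i, β i) * ((∑ i, β i) + 1) + S β = N →
      |coeff β f| ≤ A * (B ^ (∑ i, β i) * C ^ (S β)) := by
    intro N
    induction N using Nat.strong_induction_on with
    | _ N IH =>
    intro β hβN
    set γ : Fin n →₀ ℕ := β + e with hγdef
    have hγsum : (∑ i, γ i) = (∑ i, β i) + k := by
      rw [hγdef]
      simp only [Finsupp.add_apply]
      rw [Finset.sum_add_distrib, hesum]
    have hγS : S γ = S β := by
      rw [hSdef]
      simp only [hγdef, Finsupp.add_apply]
      rw [Finset.sum_add_distrib]
      have : ∑ i ∈ Finset.univ.erase i0, e i = 0 := heS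
      omega
    have hmem : ((e, β) : (Fin n →₀ ℕ) × (Fin n →₀ ℕ)) ∈ Finset.HasAntidiagonal.antidiagonal γ := by
      rw [Finset.HasAntidiagonal.mem_antidiagonal, hγdef, add_comm]
    have hsplit : coeff e v * coeff β f
        = coeff γ u - ∑ p ∈ (Finset.HasAntidiagonal.antidiagonal γ).erase (e, β),
            coeff p.1 v * coeff p.2 f := by
      rw [huvf, MvPowerSeries.coeff_mul, ← Finset.add_sum_erase _ _ hmem]
      ring
    set T := ((Finset.HasAntidiagonal.antidiagonal γ).erase (e, β)).filter
      (fun p => coeff p.1 v ≠ 0) with hTdef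
    have hTsum : ∑ p ∈ (Finset.HasAntidiagonal.antidiagonal γ).erase (e, β),
        |coeff p.1 v * coeff p.2 f|
        = ∑ p ∈ T, |coeff p.1 v * coeff p.2 f| := by
      rw [hTdef]
      refine (Finset.sum_subset (Finset.filter_subset _ _) ?_).symm
      intro p hp1 hp2
      simp only [Finset.mem_filter, not_and, not_not] at hp2
      rw [hp2 hp1, zero_mul, abs_zero]
    -- per-term bound
    have hterm : ∀ p ∈ T, |coeff p.1 v * coeff p.2 f|
        ≤ (a * A * r ^ k * (B ^ (∑ i, β i) * C ^ (S β))) * τ ^ (∑ i, p.1 i) := by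
      intro p hp
      rw [hTdef, Finset.mem_filter, Finset.mem_erase, Finset.HasAntidiagonal.mem_antidiagonal] at hp
      obtain ⟨⟨hpne, hpadd⟩, hv0⟩ := hp
      have hsum12 : (∑ i, p.1 i) + (∑ i, p.2 i) = (∑ i, β i) + k := by
        rw [← hγsum, ← hpadd]
        simp only [Finsupp.add_apply]
        rw [Finset.sum_add_distrib]
      have hS12 : S p.1 + S p.2 = S β := by
        rw [← hγS]
        simp only [hSdef, ← hpadd, Finsupp.add_apply]
        rw [Finset.sum_add_distrib]
      have hkm : k ≤ ∑ i, p.1 i := by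
        by_contra h
        exact hv0 (hvk _ (by omega))
      have hane : p.1 ≠ e := by
        intro h
        apply hpne
        have h2 : p.2 = β := by
          have h3 : e + p.2 = e + β := by
            calc e + p.2 = p.1 + p.2 := by rw [h]
              _ = β + e := by rw [hpadd, hγdef]
              _ = e + β := add_comm _ _
          exact add_left_cancel h3
        exact Prod.ext h h2
      have hd : k + 1 ≤ (∑ i, p.1 i) + S p.1 := by
        rcases Nat.lt_or_ge (∑ i, p.1 i) (k+1) with hlt | hge
        · rcases Nat.eq_zero_or_pos (S p.1) with hS0 | hS1
          · exfalso
            apply hane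
            ext i
            rcases eq_or_ne i i0 with rfl | hi
            · rw [hedef, Finsupp.single_apply, if_pos rfl]
              have := hsum_split p.1
              omega
            · have hz : p.1 i = 0 := by
                have := (Finset.sum_eq_zero_iff.mp hS0) i
                  (Finset.mem_erase.mpr ⟨hi, Finset.mem_univ i⟩)
                exact this
              rw [hz, hedef, Finsupp.single_apply, if_neg (fun h => hi h.symm)]
          · omega
        · omega
      have hmeas : (∑ i, p.2 i) * ((∑ i, p.2 i) + 1) + S p.2 < N := by
        rw [← hβN]
        rcases Nat.lt_or_ge (∑ i, p.1 i) (k+1) with hlt | hge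
        · have hx : (∑ i, p.2 i) = (∑ i, β i) := by omega
          rw [hx]
          omega
        · have hx : (∑ i, p.2 i) + 1 ≤ (∑ i, β i) := by omega
          nlinarith [hSle p.2]
      have hf2 := IH _ hmeas p.2 rfl
      have hvb := hv p.1
      have hpow : r ^ (∑ i, p.1 i) * (B ^ (∑ i, p.2 i) * C ^ (S p.2))
          ≤ r ^ k * (B ^ (∑ i, β i) * C ^ (S β)) * τ ^ (∑ i, p.1 i) := by
        have hσe : (k+1) * (∑ i, p.2 i) + k * S p.2 + (∑ i, p.1 i)
            ≤ (k+1) * (∑ i, β i) + k * S β := by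
          nlinarith [Nat.mul_le_mul_left k hd]
        have hσpow : σ ^ ((k+1) * (∑ i, p.2 i) + k * S p.2 + (∑ i, p.1 i))
            ≤ σ ^ ((k+1) * (∑ i, β i) + k * S β) := pow_le_pow_right₀ hσ1 hσe
        have hmain : (r ^ (∑ i, p.1 i) * (B ^ (∑ i, p.2 i) * C ^ (S p.2))) * σ ^ (∑ i, p.1 i)
            ≤ r ^ k * (B ^ (∑ i, β i) * C ^ (S β)) := by
          have hL : (r ^ (∑ i, p.1 i) * (B ^ (∑ i, p.2 i) * C ^ (S p.2))) * σ ^ (∑ i, p.1 i)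
              = r ^ ((∑ i, p.1 i) + (∑ i, p.2 i))
                * σ ^ ((k+1) * (∑ i, p.2 i) + k * S p.2 + (∑ i, p.1 i)) := by
            rw [hBdef, hCdef]
            ring
          have hR : r ^ k * (B ^ (∑ i, β i) * C ^ (S β))
              = r ^ (k + (∑ i, β i)) * σ ^ ((k+1) * (∑ i, β i) + k * S β) := by
            rw [hBdef, hCdef]
            ring
          rw [hL, hR, hsum12, add_comm (∑ i, β i) k]
          exact mul_le_mul_of_nonneg_left hσpow (pow_nonneg hr.le _)
        calc r ^ (∑ i, p.1 i) * (B ^ (∑ i, p.2 i) * C ^ (S p.2))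
            = (r ^ (∑ i, p.1 i) * (B ^ (∑ i, p.2 i) * C ^ (S p.2)) * σ ^ (∑ i, p.1 i))
              * τ ^ (∑ i, p.1 i) := by
              rw [mul_assoc, ← mul_pow, mul_comm σ τ, hστ, one_pow, mul_one]
          _ ≤ (r ^ k * (B ^ (∑ i, β i) * C ^ (S β))) * τ ^ (∑ i, p.1 i) :=
              mul_le_mul_of_nonneg_right hmain (pow_nonneg hτpos.le _)
          _ = r ^ k * (B ^ (∑ i, β i) * C ^ (S β)) * τ ^ (∑ i, p.1 i) := by ring
      calc |coeff p.1 v * coeff p.2 f| = |coeff p.1 v| * |coeff p.2 f| := abs_mul _ _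
        _ ≤ (a * r ^ (∑ i, p.1 i)) * (A * (B ^ (∑ i, p.2 i) * C ^ (S p.2))) := by
            apply mul_le_mul hvb hf2 (abs_nonneg _) (by positivity)
        _ = (a * A) * (r ^ (∑ i, p.1 i) * (B ^ (∑ i, p.2 i) * C ^ (S p.2))) := by ring
        _ ≤ (a * A) * (r ^ k * (B ^ (∑ i, β i) * C ^ (S β)) * τ ^ (∑ i, p.1 i)) :=
            mul_le_mul_of_nonneg_left hpow (by positivity)
        _ = (a * A * r ^ k * (B ^ (∑ i, β i) * C ^ (S β))) * τ ^ (∑ i, p.1 i) := by ring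
    -- sum of the tau powers is at most epsilon
    have hsumT : ∑ p ∈ T, τ ^ (∑ i, p.1 i) ≤ ε := by
      have h1 : ∑ p ∈ T, τ ^ (∑ i, p.1 i)
          = ∑ α ∈ T.image Prod.fst, τ ^ (∑ i, α i) := by
        rw [Finset.sum_image]
        intro x hx y hy hxy
        rw [Finset.mem_coe, Finset.mem_filter, Finset.mem_erase, Finset.HasAntidiagonal.mem_antidiagonal] at hx hy
        have h2 : x.2 = y.2 := by
          apply add_left_cancel (a := x.1)
          rw [hx.1.2]
          rw [hxy]
          rw [hy.1.2]
        exact Prod.ext hxy h2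
      have h2 : T.image Prod.fst ⊆ (Finset.Iic γ).erase 0 := by
        intro α hα
        simp only [Finset.mem_image] at hα
        obtain ⟨p, hp, rfl⟩ := hα
        rw [hTdef, Finset.mem_filter, Finset.mem_erase, Finset.HasAntidiagonal.mem_antidiagonal] at hp
        obtain ⟨⟨hpne, hpadd⟩, hv0⟩ := hp
        rw [Finset.mem_erase, Finset.mem_Iic]
        constructor
        · intro h0
          rcases Nat.eq_zero_or_pos k with hk0 | hkpos
          · apply hpne
            have he0 : e = 0 := by rw [hedef, hk0, Finsupp.single_zero]
            have hp2 : p.2 = γ := by rw [← hpadd, h0, zero_add]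
            apply Prod.ext (by rw [h0, he0])
            rw [hp2, hγdef, he0, add_zero]
          · apply hv0
            apply hvk
            rw [h0]
            simpa using hkpos
        · rw [← hpadd]
          exact le_self_add
      have h3 : ∑ α ∈ (Finset.Iic γ).erase 0, τ ^ (∑ i, α i) ≤ ((1-τ)⁻¹)^n - 1 := by
        have h0mem : (0 : Fin n →₀ ℕ) ∈ Finset.Iic γ := Finset.mem_Iic.mpr zero_le
        have h4 := Finset.add_sum_erase (Finset.Iic γ)
          (fun α : Fin n →₀ ℕ => τ ^ (∑ i, α i)) h0mem
        have hgb := geom_prod_bound τ hτpos hτlt γ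
        simp only [Finsupp.coe_zero, Pi.zero_apply, Finset.sum_const_zero, pow_zero] at h4
        linarith
      calc ∑ p ∈ T, τ ^ (∑ i, p.1 i) = ∑ α ∈ T.image Prod.fst, τ ^ (∑ i, α i) := h1
        _ ≤ ∑ α ∈ (Finset.Iic γ).erase 0, τ ^ (∑ i, α i) :=
            Finset.sum_le_sum_of_subset_of_nonneg h2
              (fun _ _ _ => pow_nonneg hτpos.le _)
        _ ≤ ((1-τ)⁻¹)^n - 1 := h3
        _ ≤ ε := by linarith [hbern]
    -- assemble
    have hX : (0:ℝ) < B ^ (∑ i, β i) * C ^ (S β) := by positivity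
    have hstep1 : c * |coeff β f|
        ≤ a * r ^ ((∑ i, β i) + k)
          + (a * A * r ^ k * (B ^ (∑ i, β i) * C ^ (S β))) * ε := by
      have hc1 : c * |coeff β f| = |coeff e v * coeff β f| := by
        rw [abs_mul]
        congr 1
        exact hvc.symm
      rw [hc1, hsplit]
      calc |coeff γ u - ∑ p ∈ (Finset.HasAntidiagonal.antidiagonal γ).erase (e, β),
              coeff p.1 v * coeff p.2 f|
          ≤ |coeff γ u| + |∑ p ∈ (Finset.HasAntidiagonal.antidiagonal γ).erase (e, β),
              coeff p.1 v * coeff p.2 f| := abs_sub _ _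
        _ ≤ a * r ^ ((∑ i, β i) + k)
            + ∑ p ∈ (Finset.HasAntidiagonal.antidiagonal γ).erase (e, β),
              |coeff p.1 v * coeff p.2 f| := by
            gcongr
            · calc |coeff γ u| ≤ a * r ^ (∑ i, γ i) := hu γ
                _ = a * r ^ ((∑ i, β i) + k) := by rw [hγsum]
            · exact Finset.abs_sum_le_sum_abs _ _
        _ = a * r ^ ((∑ i, β i) + k) + ∑ p ∈ T, |coeff p.1 v * coeff p.2 f| := by
            rw [hTsum]
        _ ≤ a * r ^ ((∑ i, β i) + k)
            + ∑ p ∈ T, (a * A * r ^ k * (B ^ (∑ i, β i) * C ^ (S β))) * τ ^ (∑ i, p.1 i) := by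
            gcongr with p hp
            exact hterm p hp
        _ = a * r ^ ((∑ i, β i) + k)
            + (a * A * r ^ k * (B ^ (∑ i, β i) * C ^ (S β))) * ∑ p ∈ T, τ ^ (∑ i, p.1 i) := by
            rw [Finset.mul_sum]
        _ ≤ a * r ^ ((∑ i, β i) + k)
            + (a * A * r ^ k * (B ^ (∑ i, β i) * C ^ (S β))) * ε := by
            have hnn : (0:ℝ) ≤ a * A * r ^ k * (B ^ (∑ i, β i) * C ^ (S β)) := by positivity
            exact add_le_add le_rfl (mul_le_mul_of_nonneg_left hsumT hnn)
    have hterm1 : a * r ^ ((∑ i, β i) + k)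
        ≤ (c/2) * (A * (B ^ (∑ i, β i) * C ^ (S β))) := by
      have hb1 : r ^ (∑ i, β i) ≤ B ^ (∑ i, β i) := pow_le_pow_left₀ hr.le hrB _
      have hb2 : (1:ℝ) ≤ C ^ (S β) := one_le_pow₀ hC1
      have hb3 : a * r ^ k ≤ A * c / 2 := by linarith
      calc a * r ^ ((∑ i, β i) + k)
          = (a * r ^ k) * (r ^ (∑ i, β i) * 1) := by rw [pow_add]; ring
        _ ≤ (A * c / 2) * (B ^ (∑ i, β i) * C ^ (S β)) := by
            apply mul_le_mul hb3
            · apply mul_le_mul hb1 hb2 (by norm_num) (pow_nonneg hBpos.le _)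
            · positivity
            · positivity
        _ = (c/2) * (A * (B ^ (∑ i, β i) * C ^ (S β))) := by ring
    have hterm2 : (a * A * r ^ k * (B ^ (∑ i, β i) * C ^ (S β))) * ε
        = (c/2) * (A * (B ^ (∑ i, β i) * C ^ (S β))) := by
      calc (a * A * r ^ k * (B ^ (∑ i, β i) * C ^ (S β))) * ε
          = (a * r ^ k * ε) * (A * (B ^ (∑ i, β i) * C ^ (S β))) := by ring
        _ = (c/2) * (A * (B ^ (∑ i, β i) * C ^ (S β))) := by rw [hare]
    have hfinal : c * |coeff β f| ≤ c * (A * (B ^ (∑ i, β i) * C ^ (S β))) := by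
      calc c * |coeff β f|
          ≤ a * r ^ ((∑ i, β i) + k)
            + (a * A * r ^ k * (B ^ (∑ i, β i) * C ^ (S β))) * ε := hstep1
        _ ≤ (c/2) * (A * (B ^ (∑ i, β i) * C ^ (S β)))
            + (c/2) * (A * (B ^ (∑ i, β i) * C ^ (S β))) := by
            rw [hterm2]
            linarith [hterm1]
        _ = c * (A * (B ^ (∑ i, β i) * C ^ (S β))) := by ring
    exact le_of_mul_le_mul_left hfinal hc
  exact main _ β rfl
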